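/- There exists a satisfiable DL-Lite_core^bag ontology that has no universal bag model for the class of all CQs. Concretely, the ontology K = ⟨T,A⟩ with TBox T = {Emp ⊑ ∃hasMngr, ∃hasMngr⁻ ⊑ Mngr} and bag ABox A containing exactly the assertions Emp(Lee) and Mngr(Hill), each with multiplicity 1 (Lee and Hill distinct individuals), is satisfiable but has no bag model I such that q^K = q^I for every CQ q. -/

import Mathlib

/-!
Common formalization of the bag semantics of DL-Lite ontologies
(Nikolaou et al., "The Bag Semantics of Ontology-Based Data Access").
-/

open scoped Classical

noncomputable section

/-- Individuals (constants). -/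
abbrev Ind : Type := ℕ
/-- Variables. -/
abbrev Var : Type := ℕ
/-- Atomic concepts (unary predicates). -/
abbrev AtomicConcept : Type := ℕ
/-- Atomic roles (binary predicates). -/
abbrev AtomicRole : Type := ℕ

/-- A role is an atomic role or its inverse. -/
inductive Role where
  | atomic : AtomicRole → Role
  | inv : AtomicRole → Role
  deriving DecidableEq

/-- A concept is an atomic concept or `∃R` for a role `R`. -/
inductive DLConcept where
  | atomic : AtomicConcept → DLConcept
  | ex : Role → DLConcept
  deriving DecidableEq

/-- TBox axioms: inclusions and disjointness axioms between concepts or roles. -/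
inductive TBoxAxiom where
  | cIncl : DLConcept → DLConcept → TBoxAxiom
  | rIncl : Role → Role → TBoxAxiom
  | cDisj : DLConcept → DLConcept → TBoxAxiom
  | rDisj : Role → Role → TBoxAxiom
  deriving DecidableEq

/-- A DL-Lite_R TBox: a finite set of TBox axioms. -/
abbrev TBox : Type := Finset TBoxAxiom

/-- A DL-Lite_core TBox: only concept inclusions and concept disjointness axioms. -/
def TBox.IsCore (T : TBox) : Prop :=
  ∀ ax ∈ T, (∃ C D, ax = TBoxAxiom.cIncl C D) ∨ (∃ C D, ax = TBoxAxiom.cDisj C D)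

/-- ABox assertions. -/
inductive Assertion where
  | conceptA : AtomicConcept → Ind → Assertion
  | roleA : AtomicRole → Ind → Ind → Assertion
  deriving DecidableEq

/-- A bag ABox: a finite bag of assertions (represented as a multiset). -/
abbrev BagABox : Type := Multiset Assertion

/-- Multiplicity of an assertion in a bag ABox, as an extended natural. -/
def BagABox.mult (A : BagABox) (s : Assertion) : ℕ∞ := (A.count s : ℕ∞)

/-- Sum of an arbitrary family of extended naturals. -/
def bagSum {α : Type*} (f : α → ℕ∞) : ℕ∞ := ⨆ s : Finset α, ∑ x ∈ s, f x

/-- A bag interpretation. -/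
structure BagInterp : Type 1 where
  Δ : Type
  dne : Nonempty Δ
  indMap : Ind → Δ
  indInj : Function.Injective indMap
  cI : AtomicConcept → Δ → ℕ∞
  rI : AtomicRole → Δ → Δ → ℕ∞

/-- Extension of the interpretation function to roles. -/
def BagInterp.roleMult (I : BagInterp) : Role → I.Δ → I.Δ → ℕ∞
  | Role.atomic P => fun u v => I.rI P u v
  | Role.inv P => fun u v => I.rI P v u

/-- Extension of the interpretation function to concepts. -/
def BagInterp.conceptMult (I : BagInterp) : DLConcept → I.Δ → ℕ∞
  | DLConcept.atomic A => fun u => I.cI A u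
  | DLConcept.ex R => fun u => bagSum (fun v => I.roleMult R u v)

/-- Multiplicity of an assertion in a bag interpretation. -/
def BagInterp.assertMult (I : BagInterp) : Assertion → ℕ∞
  | Assertion.conceptA A a => I.cI A (I.indMap a)
  | Assertion.roleA P a b => I.rI P (I.indMap a) (I.indMap b)

/-- Satisfaction of a TBox axiom by a bag interpretation. -/
def BagInterp.SatisfiesAx (I : BagInterp) : TBoxAxiom → Prop
  | TBoxAxiom.cIncl C D => ∀ u, I.conceptMult C u ≤ I.conceptMult D u
  | TBoxAxiom.rIncl R S => ∀ u v, I.roleMult R u v ≤ I.roleMult S u v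
  | TBoxAxiom.cDisj C D => ∀ u, min (I.conceptMult C u) (I.conceptMult D u) = 0
  | TBoxAxiom.rDisj R S => ∀ u v, min (I.roleMult R u v) (I.roleMult S u v) = 0

/-- A DL-Lite^bag ontology. -/
structure Ontology : Type where
  tbox : TBox
  abox : BagABox

/-- `I` is a bag model of the ontology `K`. -/
def BagInterp.IsModel (I : BagInterp) (K : Ontology) : Prop :=
  (∀ ax ∈ K.tbox, I.SatisfiesAx ax) ∧
  ∀ s : Assertion, BagABox.mult K.abox s ≤ I.assertMult s

/-- Satisfiability of an ontology under bag semantics. -/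
def Ontology.Satisfiable (K : Ontology) : Prop := ∃ I : BagInterp, I.IsModel K

/- ## Conjunctive queries -/

/-- Terms: variables or individuals. -/
inductive Term where
  | var : Var → Term
  | ind : Ind → Term
  deriving DecidableEq

def Term.varsOf : Term → List Var
  | Term.var v => [v]
  | Term.ind _ => []

def Term.indsOf : Term → List Ind
  | Term.var _ => []
  | Term.ind a => [a]

/-- Query atoms: concept atoms, role atoms, and equalities. -/
inductive QAtom where
  | conceptAt : AtomicConcept → Term → QAtom
  | roleAt : AtomicRole → Term → Term → QAtom
  | eqAt : Var → Term → QAtom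
  deriving DecidableEq

def QAtom.terms : QAtom → List Term
  | QAtom.conceptAt _ t => [t]
  | QAtom.roleAt _ t₁ t₂ => [t₁, t₂]
  | QAtom.eqAt z t => [Term.var z, t]

def QAtom.vars : QAtom → List Var
  | QAtom.conceptAt _ t => t.varsOf
  | QAtom.roleAt _ t₁ t₂ => t₁.varsOf ++ t₂.varsOf
  | QAtom.eqAt z t => z :: t.varsOf

/-- A conjunctive query `q(x) = ∃y. φ(x,y)`: a tuple of answer variables,
a tuple of existential variables, and a conjunction (list, i.e. allowing
repetitions) of atoms. -/
structure CQ : Type where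
  answerVars : List Var
  existVars : List Var
  atoms : List QAtom

def CQ.vars (q : CQ) : List Var := q.answerVars ++ q.existVars

/-- Value of a term under a valuation of the variables. -/
def termVal (I : BagInterp) (f : Var → I.Δ) : Term → I.Δ
  | Term.var v => f v
  | Term.ind a => I.indMap a

/-- Multiplicity contributed by an atom under a valuation: for predicate atoms the
multiplicity of the image tuple, for equalities the indicator of satisfaction. -/
def QAtom.mult (I : BagInterp) (f : Var → I.Δ) : QAtom → ℕ∞
  | QAtom.conceptAt A t => I.cI A (termVal I f t)
  | QAtom.roleAt P t₁ t₂ => I.rI P (termVal I f t₁) (termVal I f t₂)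
  | QAtom.eqAt z t => if f z = termVal I f t then 1 else 0

/-- The bag answers `q^I(ā)`: the sum, over all valuations of the variables of `q`
mapping the answer variables to `ā` (valuations are normalized to a fixed junk
value outside the variables of `q`), of the product of the multiplicities of the
atom occurrences of `q`. -/
def CQ.bagAnswer (q : CQ) (I : BagInterp) (a : List Ind) : ℕ∞ :=
  bagSum (fun f : {f : Var → I.Δ //
      (∀ v, v ∉ q.vars → f v = I.indMap 0) ∧
      q.answerVars.map f = a.map I.indMap} =>
    (q.atoms.map (QAtom.mult I f.1)).prod)

/-- Bag certain answers: pointwise minimum over all bag models. -/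
def bagCertain (K : Ontology) (q : CQ) (a : List Ind) : ℕ∞ :=
  ⨅ (I : BagInterp) (_ : I.IsModel K), q.bagAnswer I a

/-- Base relation of the equivalence relation generated by the equality atoms. -/
def CQ.eqBase (q : CQ) : Term → Term → Prop := fun t₁ t₂ =>
  ∃ z t, QAtom.eqAt z t ∈ q.atoms ∧ t₁ = Term.var z ∧ t₂ = t

/-- Equivalence of terms generated by the equality atoms of `q`. -/
def CQ.eqRel (q : CQ) : Term → Term → Prop := Relation.EqvGen q.eqBase

/-- Safety: the class of every variable contains a term occurring in a
non-equality atom. -/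
def CQ.Safe (q : CQ) : Prop :=
  ∀ v ∈ q.vars, ∃ t : Term, ∃ atm ∈ q.atoms,
    (∀ z s, atm ≠ QAtom.eqAt z s) ∧ t ∈ QAtom.terms atm ∧ q.eqRel (Term.var v) t

/-- Well-formedness of CQs: repetition-free disjoint tuples of variables, all
variables of the atoms among the declared variables, and safety. -/
def CQ.WellFormed (q : CQ) : Prop :=
  q.answerVars.Nodup ∧ q.existVars.Nodup ∧
  (∀ v ∈ q.answerVars, v ∉ q.existVars) ∧
  (∀ atm ∈ q.atoms, ∀ v ∈ QAtom.vars atm, v ∈ q.vars) ∧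
  q.Safe

def CQ.mentionsTerm (q : CQ) (t : Term) : Prop := ∃ atm ∈ q.atoms, t ∈ QAtom.terms atm

/-- Adjacency in the Gaifman graph of `q` (on terms; equality atoms merge the
classes of their two terms, which for connectivity purposes is the same as
making them adjacent). -/
def CQ.gaifmanAdj (q : CQ) : Term → Term → Prop := fun t₁ t₂ =>
  ∃ atm ∈ q.atoms, t₁ ∈ QAtom.terms atm ∧ t₂ ∈ QAtom.terms atm

/-- A CQ is rooted if every connected component of its Gaifman graph contains
an answer variable or an individual. -/
def CQ.Rooted (q : CQ) : Prop :=
  ∀ t : Term, q.mentionsTerm t →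
    ∃ t' : Term, Relation.ReflTransGen q.gaifmanAdj t t' ∧
      ((∃ v ∈ q.answerVars, t' = Term.var v) ∨ ∃ a : Ind, t' = Term.ind a)

/- ## Set semantics -/

/-- A classical (set) interpretation. -/
structure SetInterp : Type 1 where
  Δ : Type
  dne : Nonempty Δ
  indMap : Ind → Δ
  indInj : Function.Injective indMap
  cI : AtomicConcept → Set Δ
  rI : AtomicRole → Set (Δ × Δ)

def SetInterp.roleSet (I : SetInterp) : Role → Set (I.Δ × I.Δ)
  | Role.atomic P => I.rI P
  | Role.inv P => {p | (p.2, p.1) ∈ I.rI P}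

def SetInterp.conceptSet (I : SetInterp) : DLConcept → Set I.Δ
  | DLConcept.atomic A => I.cI A
  | DLConcept.ex R => {u | ∃ v, (u, v) ∈ I.roleSet R}

def SetInterp.SatisfiesAx (I : SetInterp) : TBoxAxiom → Prop
  | TBoxAxiom.cIncl C D => I.conceptSet C ⊆ I.conceptSet D
  | TBoxAxiom.rIncl R S => I.roleSet R ⊆ I.roleSet S
  | TBoxAxiom.cDisj C D => I.conceptSet C ∩ I.conceptSet D = ∅
  | TBoxAxiom.rDisj R S => I.roleSet R ∩ I.roleSet S = ∅

def SetInterp.SatisfiesAssertion (I : SetInterp) : Assertion → Prop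
  | Assertion.conceptA A a => I.indMap a ∈ I.cI A
  | Assertion.roleA P a b => (I.indMap a, I.indMap b) ∈ I.rI P

/-- `I` is a (set) model of the TBox `T` and the set ABox `A`. -/
def SetInterp.IsModelOf (I : SetInterp) (T : TBox) (A : Finset Assertion) : Prop :=
  (∀ ax ∈ T, I.SatisfiesAx ax) ∧ ∀ s ∈ A, I.SatisfiesAssertion s

def setTermVal (I : SetInterp) (f : Var → I.Δ) : Term → I.Δ
  | Term.var v => f v
  | Term.ind a => I.indMap a

def SetInterp.SatAtom (I : SetInterp) (f : Var → I.Δ) : QAtom → Prop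
  | QAtom.conceptAt A t => setTermVal I f t ∈ I.cI A
  | QAtom.roleAt P t₁ t₂ => (setTermVal I f t₁, setTermVal I f t₂) ∈ I.rI P
  | QAtom.eqAt z t => f z = setTermVal I f t

/-- `q(ā)` holds in the set interpretation `I`. -/
def SetInterp.SatCQ (I : SetInterp) (q : CQ) (a : List Ind) : Prop :=
  ∃ f : Var → I.Δ, q.answerVars.map f = a.map I.indMap ∧ ∀ atm ∈ q.atoms, I.SatAtom f atm

/-- Entailment of a concept inclusion from a TBox (standard set semantics). -/
def TBox.EntailsCI (T : TBox) (C D : DLConcept) : Prop :=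
  ∀ I : SetInterp, (∀ ax ∈ T, I.SatisfiesAx ax) → I.conceptSet C ⊆ I.conceptSet D

/- ## The canonical bag model -/

/-- Domain elements of the canonical model: individuals and anonymous elements
`w^j_{u,R}`. -/
inductive CanElem where
  | ind : Ind → CanElem
  | anon : CanElem → Role → ℕ → CanElem
  deriving DecidableEq

def CanElem.isAnon : CanElem → Prop
  | CanElem.ind _ => False
  | CanElem.anon _ _ _ => True

/-- A stage of the canonical-model construction: a set of active elements and
bag interpretations of the predicates. -/
structure PreInterp : Type where
  active : Set CanElem
  c : AtomicConcept → CanElem → ℕ∞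
  r : AtomicRole → CanElem → CanElem → ℕ∞

def PreInterp.toInterp (P : PreInterp) : BagInterp where
  Δ := CanElem
  dne := ⟨CanElem.ind 0⟩
  indMap := CanElem.ind
  indInj := fun a b h => by cases h; rfl
  cI := P.c
  rI := P.r

/-- Concept closure: `ccl(u,I,T)(C)` is the supremum of `C₀^I(u)` over all
concepts `C₀` with `T ⊨ C₀ ⊑ C`. -/
def cclI (T : TBox) (I : BagInterp) (C : DLConcept) (u : I.Δ) : ℕ∞ :=
  ⨆ C₀ : {C₀ : DLConcept // TBox.EntailsCI T C₀ C}, I.conceptMult C₀.1 u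

def PreInterp.ccl (P : PreInterp) (T : TBox) (u : CanElem) (C : DLConcept) : ℕ∞ :=
  cclI T P.toInterp C u

/-- `δ = ccl(u,C_{i-1},T)(∃R) − (∃R)^{C_{i-1}}(u)` (truncated subtraction). -/
def PreInterp.delta (P : PreInterp) (T : TBox) (u : CanElem) (R : Role) : ℕ∞ :=
  P.ccl T u (DLConcept.ex R) - P.toInterp.conceptMult (DLConcept.ex R) u

/-- The anonymous elements freshly added when stepping from `P`. -/
def PreInterp.NewAnon (P : PreInterp) (T : TBox) (w : CanElem) : Prop :=
  ∃ u R j, w = CanElem.anon u R j ∧ u ∈ P.active ∧ (j : ℕ∞) < P.delta T u R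

/-- One step of the canonical-model construction. -/
def PreInterp.step (P : PreInterp) (T : TBox) : PreInterp where
  active := P.active ∪ {w | P.NewAnon T w}
  c := fun A u => if u ∈ P.active then P.ccl T u (DLConcept.atomic A) else 0
  r := fun P₀ u v =>
    if u ∈ P.active ∧ v ∈ P.active then P.r P₀ u v
    else if ∃ j, v = CanElem.anon u (Role.atomic P₀) j ∧ P.NewAnon T v then 1
    else if ∃ j, u = CanElem.anon v (Role.inv P₀) j ∧ P.NewAnon T u then 1
    else 0

/-- The stages `C_i(K)` of the canonical bag model. -/
def canStage (K : Ontology) : ℕ → PreInterp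
  | 0 =>
    { active := Set.range CanElem.ind
      c := fun A u =>
        match u with
        | CanElem.ind a => BagABox.mult K.abox (Assertion.conceptA A a)
        | _ => 0
      r := fun P u v =>
        match u, v with
        | CanElem.ind a, CanElem.ind b => BagABox.mult K.abox (Assertion.roleA P a b)
        | _, _ => 0 }
  | (i + 1) => (canStage K i).step K.tbox

/-- The canonical bag model `C(K) = ⋃_{i ≥ 0} C_i(K)` (pointwise maximum). -/
def canInterp (K : Ontology) : BagInterp where
  Δ := CanElem
  dne := ⟨CanElem.ind 0⟩
  indMap := CanElem.ind
  indInj := fun a b h => by cases h; rfl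
  cI := fun A u => ⨆ i, (canStage K i).c A u
  rI := fun P u v => ⨆ i, (canStage K i).r P u v

/-- The canonical bag model `C(⟨∅,A⟩)` of the ontology with empty TBox:
individuals as domain, every predicate interpreted by its ABox bag. -/
def emptyCanInterp (A : BagABox) : BagInterp where
  Δ := Ind
  dne := ⟨0⟩
  indMap := id
  indInj := fun _ _ h => h
  cI := fun C a => BagABox.mult A (Assertion.conceptA C a)
  rI := fun P a b => BagABox.mult A (Assertion.roleA P a b)

/-- `[q,z]^{C(K)}`: bag answers over the canonical model computed only over
valuations sending the variables of `z` to anonymous elements and the remaining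
existential variables to individuals. -/
def CQ.restrictedAnswer (q : CQ) (K : Ontology) (z : Finset Var) (a : List Ind) : ℕ∞ :=
  bagSum (fun f : {f : Var → CanElem //
      (∀ v, v ∉ q.vars → f v = CanElem.ind 0) ∧
      q.answerVars.map f = a.map CanElem.ind ∧
      ∀ v ∈ q.existVars, (v ∈ z → CanElem.isAnon (f v)) ∧ (v ∉ z → ∃ b : Ind, f v = CanElem.ind b)} =>
    (q.atoms.map (QAtom.mult (canInterp K) f.1)).prod)

/- ## Ma-connected subsets, realisability, and the per-`z` rewritten query -/

/-- `t` is a variable belonging to `z`. -/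
def Term.IsZVar (t : Term) (z : Finset Var) : Prop := ∃ v ∈ z, t = Term.var v

/-- Adjacency in the Gaifman graph restricted to nodes that are variables of `z`. -/
def CQ.zAdj (q : CQ) (z : Finset Var) : Term → Term → Prop := fun t₁ t₂ =>
  q.gaifmanAdj t₁ t₂ ∧ t₁.IsZVar z ∧ t₂.IsZVar z

/-- `z'` is maximally connected in the anonymous part (ma-connected) within `z`. -/
def CQ.MAConnected (q : CQ) (z z' : Finset Var) : Prop :=
  z' ⊆ z ∧
  (∀ v ∈ z', ∀ w ∈ z, Relation.ReflTransGen (q.zAdj z) (Term.var v) (Term.var w) → w ∈ z') ∧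
  (∀ v ∈ z', ∀ w ∈ z', Relation.ReflTransGen (q.zAdj z) (Term.var v) (Term.var w))

/-- `φ_{z'}`: the subconjunction of all atoms of `q` mentioning a variable of `z'`. -/
def CQ.subAtoms (q : CQ) (z' : Finset Var) : List QAtom :=
  q.atoms.filter (fun atm => decide (∃ v ∈ z', v ∈ QAtom.vars atm))

def termsOfList (l : List QAtom) : List Term :=
  l.foldr (fun atm acc => QAtom.terms atm ++ acc) []

/-- `t_{z'}`: all terms occurring in `φ_{z'}` that are not variables of `z`. -/
def CQ.tTerms (q : CQ) (z z' : Finset Var) : List Term :=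
  (termsOfList (q.subAtoms z')).filter (fun t => decide (¬ t.IsZVar z))

/-- `atm` is a legitimate choice of `α_{z'}`: an atom of `φ_{z'}` of the form
`P(t,z)` or `P(z,t)` with `z ∈ z'` and the term `t` not a variable of `z`. -/
def IsAlphaFor (q : CQ) (z z' : Finset Var) (atm : QAtom) : Prop :=
  atm ∈ q.subAtoms z' ∧
  ((∃ P t v, v ∈ z' ∧ ¬ Term.IsZVar t z ∧ atm = QAtom.roleAt P t (Term.var v)) ∨
   (∃ P t v, v ∈ z' ∧ ¬ Term.IsZVar t z ∧ atm = QAtom.roleAt P (Term.var v) t))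

def CQ.inds (q : CQ) : List Ind :=
  (termsOfList q.atoms).foldr (fun t acc => t.indsOf ++ acc) []

def CQ.maxInd (q : CQ) : Ind := q.inds.foldr max 0

/-- The individual `a` of `q^a_{z'}`: the individual among `t_{z'}` if one
exists, and a fresh individual otherwise. -/
def freshA (q : CQ) (z z' : Finset Var) : Ind :=
  if h : ∃ c : Ind, Term.ind c ∈ q.tTerms z z' then h.choose else q.maxInd + 1

/-- A fresh individual `b` (distinct from `freshA`). -/
def freshB (q : CQ) : Ind := q.maxInd + 2

/-- The one-assertion bag ABox `A'` used to test realisability: `{P(a,b)}` if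
`α_{z'} = P(t,z)` and `{P(b,a)}` if `α_{z'} = P(z,t)`. -/
def alphaABox (z' : Finset Var) (atm : QAtom) (a b : Ind) : BagABox :=
  match atm with
  | QAtom.roleAt P _ t₂ =>
      if Term.IsZVar t₂ z' then {Assertion.roleA P a b} else {Assertion.roleA P b a}
  | _ => 0

def subVars (q : CQ) (z' : Finset Var) : List Var :=
  (q.subAtoms z').foldr (fun atm acc => QAtom.vars atm ++ acc) []

/-- The bag answer `(q^a_{z'})^{C(⟨T,A'⟩)}(⟨⟩)` of the Boolean query
`q^a_{z'}() = ∃x'.∃z'. φ_{z'} ∧ ⋀_{t ∈ t_{z'}}(t = a) ∧ ⋀_{z ∈ z'}(z ≠ a)`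
over the canonical model of `⟨T,A'⟩`. -/
def realQAnswer (T : TBox) (q : CQ) (z z' : Finset Var) (atm : QAtom) : ℕ∞ :=
  bagSum (fun f : {f : Var → CanElem //
      (∀ v, v ∉ subVars q z' → f v = CanElem.ind 0) ∧
      (∀ t ∈ q.tTerms z z',
        termVal (canInterp ⟨T, alphaABox z' atm (freshA q z z') (freshB q)⟩) f t
          = CanElem.ind (freshA q z z')) ∧
      ∀ v ∈ z', f v ≠ CanElem.ind (freshA q z z')} =>
    ((q.subAtoms z').map
      (QAtom.mult (canInterp ⟨T, alphaABox z' atm (freshA q z z') (freshB q)⟩) f.1)).prod)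

/-- Equality-consistency of `z`: no equality atom `z = t` with `z ∈ z` and `t ∉ z`. -/
def EqConsistent (q : CQ) (z : Finset Var) : Prop :=
  ∀ v t, QAtom.eqAt v t ∈ q.atoms → v ∈ z → Term.IsZVar t z

/-- The ma-connected subset `z'` is realisable by `T` (w.r.t. the chosen `α_{z'}`). -/
def RealisableMA (T : TBox) (q : CQ) (z z' : Finset Var) (atm : QAtom) : Prop :=
  1 ≤ realQAnswer T q z z' atm

/-- `z` is realisable by `T`: equality-consistent and every nonempty
ma-connected subset of `z` is realisable. -/
def RealisableZ (T : TBox) (q : CQ) (z : Finset Var) (alpha : Finset Var → QAtom) : Prop :=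
  EqConsistent q z ∧
  ∀ z' : Finset Var, q.MAConnected z z' → z'.Nonempty → RealisableMA T q z z' (alpha z')

/-- The nonempty ma-connected subsets of `z`. -/
def maSets (q : CQ) (z : Finset Var) : Finset (Finset Var) :=
  z.powerset.filter (fun z' => q.MAConnected z z' ∧ z'.Nonempty)

def tTermVars (q : CQ) (z z' : Finset Var) : List Var :=
  (q.tTerms z z').foldr (fun t acc => Term.varsOf t ++ acc) []

/-- The equalities identifying all the terms of `t_{z'}`. -/
def eqAtomsFor (q : CQ) (z z' : Finset Var) : List QAtom :=
  (tTermVars q z z').foldr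
    (fun v acc => ((q.tTerms z z').map (fun t => QAtom.eqAt v t)) ++ acc) []

/-- Atoms of `q_z`: the atoms of `q` not mentioning a variable of `z`, plus,
for each nonempty ma-connected `z' ⊆ z`, the atom `α_{z'}` together with the
equalities identifying the terms of `t_{z'}`. -/
def qzAtoms (q : CQ) (z : Finset Var) (alpha : Finset Var → QAtom) : List QAtom :=
  q.atoms.filter (fun atm => decide (¬ ∃ v ∈ z, v ∈ QAtom.vars atm))
    ++ (maSets q z).toList.foldr (fun z' acc => alpha z' :: (eqAtomsFor q z z' ++ acc)) []

/-- The CQ `q_z(x) = ∃y'. φ_z(x,y')`. -/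
def qz (q : CQ) (z : Finset Var) (alpha : Finset Var → QAtom) : CQ where
  answerVars := q.answerVars
  existVars := q.existVars.filter (fun v => decide (∃ atm ∈ qzAtoms q z alpha, v ∈ QAtom.vars atm))
  atoms := qzAtoms q z alpha

/- ## The BALG rewriting `q̄` -/

/-- Value of an atom of `q_z` after the rewriting step 3 (`chasing back'' with
the TBox): concept atoms `A(t)` become `⋁_{T ⊨ C ⊑ A} ζ_C(t)`, role atoms with a
`z`-variable become the corresponding truncated difference, and the remaining
atoms are evaluated as before. -/
def rewAtomVal (T : TBox) (I : BagInterp) (z : Finset Var) (f : Var → I.Δ) : QAtom → ℕ∞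
  | QAtom.conceptAt A t => cclI T I (DLConcept.atomic A) (termVal I f t)
  | QAtom.roleAt P t₁ t₂ =>
      if Term.IsZVar t₂ z then
        cclI T I (DLConcept.ex (Role.atomic P)) (termVal I f t₁)
          - I.conceptMult (DLConcept.ex (Role.atomic P)) (termVal I f t₁)
      else if Term.IsZVar t₁ z then
        cclI T I (DLConcept.ex (Role.inv P)) (termVal I f t₂)
          - I.conceptMult (DLConcept.ex (Role.inv P)) (termVal I f t₂)
      else I.rI P (termVal I f t₁) (termVal I f t₂)
  | QAtom.eqAt v t => if f v = termVal I f t then 1 else 0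

/-- Bag answers of the BALG query `q̄_z`, obtained from `q_z` by projecting only
the variables of `y' ∖ z` and replacing atoms as in `rewAtomVal`. -/
def rewAnswer (T : TBox) (qq : CQ) (z : Finset Var) (I : BagInterp) (a : List Ind) : ℕ∞ :=
  bagSum (fun f : {f : Var → I.Δ //
      (∀ v, v ∉ qq.answerVars ++ qq.existVars.filter (fun u => decide (u ∉ z)) →
        f v = I.indMap 0) ∧
      qq.answerVars.map f = a.map I.indMap} =>
    (qq.atoms.map (rewAtomVal T I z f.1)).prod)

/- ## BALG¹_ε queries -/

def Term.fvars (t : Term) : Finset Var :=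
  match t with
  | Term.var v => {v}
  | Term.ind _ => ∅

/-- Syntax of BALG¹_ε queries. -/
inductive BQuery where
  | atomC : AtomicConcept → Term → BQuery
  | atomR : AtomicRole → Term → Term → BQuery
  | conj : BQuery → BQuery → BQuery
  | eqSel : BQuery → Var → Term → BQuery
  | proj : List Var → BQuery → BQuery
  | maxU : BQuery → BQuery → BQuery
  | arithU : BQuery → BQuery → BQuery
  | diff : BQuery → BQuery → BQuery

/-- Answer variables of a BALG¹_ε query. -/
def BQuery.fv : BQuery → Finset Var
  | BQuery.atomC _ t => t.fvars
  | BQuery.atomR _ t₁ t₂ => t₁.fvars ∪ t₂.fvars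
  | BQuery.conj q₁ q₂ => q₁.fv ∪ q₂.fv
  | BQuery.eqSel q _ t => q.fv ∪ t.fvars
  | BQuery.proj ys q => q.fv \ ys.toFinset
  | BQuery.maxU q₁ _ => q₁.fv
  | BQuery.arithU q₁ _ => q₁.fv
  | BQuery.diff q₁ _ => q₁.fv

/-- Well-formedness of BALG¹_ε queries. -/
def BQuery.WF : BQuery → Prop
  | BQuery.atomC _ _ => True
  | BQuery.atomR _ _ _ => True
  | BQuery.conj q₁ q₂ => q₁.WF ∧ q₂.WF
  | BQuery.eqSel q x _ => q.WF ∧ x ∈ q.fv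
  | BQuery.proj _ q => q.WF
  | BQuery.maxU q₁ q₂ => q₁.WF ∧ q₂.WF ∧ q₁.fv = q₂.fv
  | BQuery.arithU q₁ q₂ => q₁.WF ∧ q₂.WF ∧ q₁.fv = q₂.fv
  | BQuery.diff q₁ q₂ => q₁.WF ∧ q₂.WF ∧ q₁.fv = q₂.fv

/-- Semantics of BALG¹_ε queries under a valuation of the answer variables. -/
def BQuery.val (I : BagInterp) : BQuery → (Var → I.Δ) → ℕ∞
  | BQuery.atomC A t, f => I.cI A (termVal I f t)
  | BQuery.atomR P t₁ t₂, f => I.rI P (termVal I f t₁) (termVal I f t₂)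
  | BQuery.conj q₁ q₂, f => q₁.val I f * q₂.val I f
  | BQuery.eqSel q x t, f => if f x = termVal I f t then q.val I f else 0
  | BQuery.proj ys q, f => bagSum (fun g : {g : Var → I.Δ // ∀ v, v ∉ ys → g v = f v} => q.val I g.1)
  | BQuery.maxU q₁ q₂, f => max (q₁.val I f) (q₂.val I f)
  | BQuery.arithU q₁ q₂, f => q₁.val I f + q₂.val I f
  | BQuery.diff q₁ q₂, f => q₁.val I f - q₂.val I f

/-- Bag answers of a BALG¹_ε query with answer variables `xs` on a tuple `a`. -/
def BQuery.answer (Q : BQuery) (xs : List Var) (I : BagInterp) (a : List Ind) : ℕ∞ :=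
  if a.length = xs.length then Q.val I (fun v => I.indMap (a.getD (xs.idxOf v) 0)) else 0

/- ## Enumerated bags, e-homomorphisms, and e-valuations -/

/-- Enumerated copies of a bag of domain elements (for an atomic concept). -/
def EBagC (I : BagInterp) (A : AtomicConcept) : Type :=
  {p : I.Δ × ℕ // 1 ≤ p.2 ∧ (p.2 : ℕ∞) ≤ I.cI A p.1}

/-- Enumerated copies of a bag of pairs (for an atomic role). -/
def EBagR (I : BagInterp) (P : AtomicRole) : Type :=
  {p : (I.Δ × I.Δ) × ℕ // 1 ≤ p.2 ∧ (p.2 : ℕ∞) ≤ I.rI P p.1.1 p.1.2}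

/-- An e-homomorphism between the enumerated versions of two bag interpretations. -/
structure EHom (I J : BagInterp) where
  h : I.Δ → J.Δ
  hInd : ∀ a : Ind, h (I.indMap a) = J.indMap a
  hC : ∀ A : AtomicConcept, EBagC I A → EBagC J A
  hC_fst : ∀ (A : AtomicConcept) (x : EBagC I A), (hC A x).1.1 = h x.1.1
  hR : ∀ P : AtomicRole, EBagR I P → EBagR J P
  hR_fst : ∀ (P : AtomicRole) (x : EBagR I P), (hR P x).1.1 = (h x.1.1.1, h x.1.1.2)

/-- Predicate-injectivity on individuals of an e-homomorphism. -/
def EHom.PredInj {I J : BagInterp} (e : EHom I J) : Prop :=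
  ∀ u : I.Δ, (∃ a : Ind, e.h u = J.indMap a) →
    (∀ A : AtomicConcept, ∀ x y : EBagC I A,
      x.1.1 = u → y.1.1 = u → x.1.2 ≠ y.1.2 → e.hC A x ≠ e.hC A y) ∧
    (∀ P : AtomicRole, ∀ x y : EBagR I P, x.1.1.1 = u → y.1.1.1 = u →
      (x.1.1.2, x.1.2) ≠ (y.1.1.2, y.1.2) → e.hR P x ≠ e.hR P y) ∧
    (∀ P : AtomicRole, ∀ x y : EBagR I P, x.1.1.2 = u → y.1.1.2 = u →
      (x.1.1.1, x.1.2) ≠ (y.1.1.1, y.1.2) → e.hR P x ≠ e.hR P y)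

/-- Enumerated atoms of a CQ (seen as a bag of atoms). -/
def EAtom (q : CQ) : Type := {p : QAtom × ℕ // 1 ≤ p.2 ∧ p.2 ≤ q.atoms.count p.1}

/-- An e-valuation of the enumerated query `q^e` over the enumerated
interpretation `I^e`. -/
structure EVal (q : CQ) (I : BagInterp) where
  ν : Var → I.Δ
  hjunk : ∀ v, v ∉ q.vars → ν v = I.indMap 0
  heq : ∀ z t, QAtom.eqAt z t ∈ q.atoms → ν z = termVal I ν t
  ℓ : EAtom q → ℕ
  hone : ∀ e : EAtom q, 1 ≤ ℓ e
  hconcept : ∀ (e : EAtom q) (A : AtomicConcept) (t : Term),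
    e.1.1 = QAtom.conceptAt A t → (ℓ e : ℕ∞) ≤ I.cI A (termVal I ν t)
  hrole : ∀ (e : EAtom q) (P : AtomicRole) (t₁ t₂ : Term),
    e.1.1 = QAtom.roleAt P t₁ t₂ → (ℓ e : ℕ∞) ≤ I.rI P (termVal I ν t₁) (termVal I ν t₂)
  heqm : ∀ (e : EAtom q) (z : Var) (t : Term), e.1.1 = QAtom.eqAt z t → ℓ e = 1

/-- The tuple of domain elements to which an e-atom is sent by an e-valuation. -/
def EVal.imgTerms {q : CQ} {I : BagInterp} (ev : EVal q I) (e : EAtom q) : List I.Δ :=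
  (QAtom.terms e.1.1).map (termVal I ev.ν)

/-- The enumerated image of an e-atom under an e-valuation. -/
def EVal.img {q : CQ} {I : BagInterp} (ev : EVal q I) (e : EAtom q) : List I.Δ × ℕ :=
  (ev.imgTerms e, ev.ℓ e)

/- ## Auxiliary concrete queries -/

/-- The CQ `ζ_C(x)`: `A(x)`, `∃y.P(x,y)` or `∃y.P(y,x)`. -/
def zetaCQ : DLConcept → CQ
  | DLConcept.atomic A => ⟨[0], [], [QAtom.conceptAt A (Term.var 0)]⟩
  | DLConcept.ex (Role.atomic P) => ⟨[0], [1], [QAtom.roleAt P (Term.var 0) (Term.var 1)]⟩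
  | DLConcept.ex (Role.inv P) => ⟨[0], [1], [QAtom.roleAt P (Term.var 1) (Term.var 0)]⟩

/-- The CQ `q(x) = R(x,x)`. -/
def selfCQ (P : AtomicRole) : CQ := ⟨[0], [], [QAtom.roleAt P (Term.var 0) (Term.var 0)]⟩

/-- Emp = atomic concept 0, Mngr = atomic concept 1, hasMngr = atomic role 0,
Lee = individual 0, Hill = individual 1. TBox `{Emp ⊑ ∃hasMngr, ∃hasMngr⁻ ⊑ Mngr}`. -/
def tboxEx : TBox :=
  {TBoxAxiom.cIncl (DLConcept.atomic 0) (DLConcept.ex (Role.atomic 0)),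
   TBoxAxiom.cIncl (DLConcept.ex (Role.inv 0)) (DLConcept.atomic 1)}

/-- The bag ABox containing exactly `Emp(Lee)` and `Mngr(Hill)`, each with
multiplicity 1. -/
def aboxEx : BagABox := {Assertion.conceptA 0 0, Assertion.conceptA 1 1}

/- ## Auxiliary lemmas for Statement 2 -/

lemma le_bagSum {α : Type*} (f : α → ℕ∞) (a : α) : f a ≤ bagSum f := by
  have h : f a = ∑ x ∈ ({a} : Finset α), f x := by simp
  rw [h]
  exact le_iSup (fun s : Finset α => ∑ x ∈ s, f x) ({a} : Finset α)

lemma bagSum_le {α : Type*} {f : α → ℕ∞} {c : ℕ∞}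
    (h : ∀ s : Finset α, ∑ x ∈ s, f x ≤ c) : bagSum f ≤ c := iSup_le h

lemma bagSum_eq_zero {α : Type*} {f : α → ℕ∞} (h : ∀ x, f x = 0) : bagSum f = 0 := by
  refine le_antisymm (bagSum_le fun s => ?_) zero_le
  simp [h]

lemma bagSum_eq_single {α : Type*} (f : α → ℕ∞) (a : α)
    (h : ∀ b, b ≠ a → f b = 0) : bagSum f = f a := by
  refine le_antisymm (bagSum_le fun s => ?_) (le_bagSum f a)
  calc ∑ x ∈ s, f x = ∑ x ∈ s, if x = a then f a else 0 := by
        refine Finset.sum_congr rfl fun x _ => ?_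
        by_cases hx : x = a
        · simp [hx]
        · simp [hx, h x hx]
    _ ≤ f a := by
        rw [Finset.sum_ite_eq' s a (fun _ => f a)]
        split <;> simp

lemma add_le_bagSum {α : Type*} (f : α → ℕ∞) (a b : α) (hab : a ≠ b) :
    f a + f b ≤ bagSum f := by
  have h : ∑ x ∈ ({a, b} : Finset α), f x = f a + f b := Finset.sum_pair hab
  rw [← h]
  exact le_iSup (fun s : Finset α => ∑ x ∈ s, f x) _

/-- A model of the example where Lee's manager is Hill. -/
@[reducible] def exI1 : BagInterp where
  Δ := ℕ
  dne := ⟨0⟩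
  indMap := id
  indInj := fun _ _ h => h
  cI := fun A u => if (A = 0 ∧ u = 0) ∨ (A = 1 ∧ u = 1) then 1 else 0
  rI := fun P u v => if P = 0 ∧ u = 0 ∧ v = 1 then 1 else 0

/-- A model of the example where Lee's manager is an anonymous element `2`. -/
@[reducible] def exI2 : BagInterp where
  Δ := ℕ
  dne := ⟨0⟩
  indMap := id
  indInj := fun _ _ h => h
  cI := fun A u => if (A = 0 ∧ u = 0) ∨ (A = 1 ∧ (u = 1 ∨ u = 2)) then 1 else 0
  rI := fun P u v => if P = 0 ∧ u = 0 ∧ v = 2 then 1 else 0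

/-- The Boolean CQ `∃y. Mngr(y)`. -/
def qMngr : CQ := ⟨[], [0], [QAtom.conceptAt 1 (Term.var 0)]⟩

/-- The Boolean CQ `hasMngr(Lee, Hill)`. -/
def qLH : CQ := ⟨[], [], [QAtom.roleAt 0 (Term.ind 0) (Term.ind 1)]⟩

lemma qMngr_wf : qMngr.WellFormed := by
  refine ⟨by simp [qMngr], by simp [qMngr], by simp [qMngr], ?_, ?_⟩
  · intro atm hatm v hv
    simp [qMngr] at hatm
    subst hatm
    simp [qMngr, QAtom.vars, Term.varsOf, CQ.vars] at hv ⊢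
    exact hv
  · intro v hv
    simp [qMngr, CQ.vars] at hv
    subst hv
    refine ⟨Term.var 0, QAtom.conceptAt 1 (Term.var 0), by simp [qMngr], ?_, ?_, ?_⟩
    · intro z s; simp
    · simp [QAtom.terms]
    · exact Relation.EqvGen.refl _

lemma qLH_wf : qLH.WellFormed := by
  refine ⟨by simp [qLH], by simp [qLH], by simp [qLH], ?_, ?_⟩
  · intro atm hatm v hv
    simp [qLH] at hatm
    subst hatm
    simp [QAtom.vars, Term.varsOf] at hv
  · intro v hv
    simp [qLH, CQ.vars] at hv

lemma abox_mult_emp : BagABox.mult aboxEx (Assertion.conceptA 0 0) = 1 := by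
  simp [BagABox.mult, aboxEx]

lemma abox_mult_mngr : BagABox.mult aboxEx (Assertion.conceptA 1 1) = 1 := by
  simp [BagABox.mult, aboxEx]

/-- The bag answer of `qLH` on the empty tuple, in any interpretation. -/
lemma qLH_answer (J : BagInterp) :
    qLH.bagAnswer J [] = J.rI 0 (J.indMap 0) (J.indMap 1) := by
  have hmem : (∀ v, v ∉ qLH.vars → (fun _ : Var => J.indMap 0) v = J.indMap 0) ∧
      qLH.answerVars.map (fun _ : Var => J.indMap 0) = ([] : List Ind).map J.indMap := by
    exact ⟨fun v _ => rfl, rfl⟩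
  have := bagSum_eq_single
    (fun f : {f : Var → J.Δ //
        (∀ v, v ∉ qLH.vars → f v = J.indMap 0) ∧
        qLH.answerVars.map f = ([] : List Ind).map J.indMap} =>
      (qLH.atoms.map (QAtom.mult J f.1)).prod)
    ⟨fun _ => J.indMap 0, hmem⟩
    (fun b hb => by
      exfalso
      apply hb
      apply Subtype.ext
      funext v
      exact b.2.1 v (by simp [qLH, CQ.vars]))
  rw [CQ.bagAnswer, this]
  simp [qLH, QAtom.mult, termVal]

/-- The bag answer of `qMngr` is at least the multiplicity of `Mngr` at Hill. -/
lemma qMngr_answer_ge (J : BagInterp) :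
    J.cI 1 (J.indMap 1) ≤ qMngr.bagAnswer J [] := by
  have hmem : (∀ v, v ∉ qMngr.vars →
        (fun v : Var => if v = 0 then J.indMap 1 else J.indMap 0) v = J.indMap 0) ∧
      qMngr.answerVars.map (fun v : Var => if v = 0 then J.indMap 1 else J.indMap 0)
        = ([] : List Ind).map J.indMap := by
    constructor
    · intro v hv
      have : v ≠ 0 := by simpa [qMngr, CQ.vars] using hv
      simp [this]
    · rfl
  have h := le_bagSum
    (fun f : {f : Var → J.Δ //
        (∀ v, v ∉ qMngr.vars → f v = J.indMap 0) ∧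
        qMngr.answerVars.map f = ([] : List Ind).map J.indMap} =>
      (qMngr.atoms.map (QAtom.mult J f.1)).prod)
    ⟨fun v => if v = 0 then J.indMap 1 else J.indMap 0, hmem⟩
  rw [CQ.bagAnswer]
  refine le_trans (le_of_eq ?_) h
  simp [qMngr, QAtom.mult, termVal]

/-- Lower bound on the bag answer of `qMngr` by two distinct witnesses. -/
lemma qMngr_answer_ge_two (J : BagInterp) (u w : J.Δ) (huw : u ≠ w) :
    J.cI 1 u + J.cI 1 w ≤ qMngr.bagAnswer J [] := by
  have hmem : ∀ x : J.Δ, (∀ v, v ∉ qMngr.vars →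
        (fun v : Var => if v = 0 then x else J.indMap 0) v = J.indMap 0) ∧
      qMngr.answerVars.map (fun v : Var => if v = 0 then x else J.indMap 0)
        = ([] : List Ind).map J.indMap := by
    intro x
    constructor
    · intro v hv
      have : v ≠ 0 := by simpa [qMngr, CQ.vars] using hv
      simp [this]
    · rfl
  have hne : (⟨fun v => if v = 0 then u else J.indMap 0, hmem u⟩ :
      {f : Var → J.Δ // (∀ v, v ∉ qMngr.vars → f v = J.indMap 0) ∧
        qMngr.answerVars.map f = ([] : List Ind).map J.indMap}) ≠
      ⟨fun v => if v = 0 then w else J.indMap 0, hmem w⟩ := by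
    intro h
    apply huw
    have := congrArg (fun g => g.1 0) h
    simpa using this
  have h := add_le_bagSum
    (fun f : {f : Var → J.Δ //
        (∀ v, v ∉ qMngr.vars → f v = J.indMap 0) ∧
        qMngr.answerVars.map f = ([] : List Ind).map J.indMap} =>
      (qMngr.atoms.map (QAtom.mult J f.1)).prod)
    ⟨fun v => if v = 0 then u else J.indMap 0, hmem u⟩
    ⟨fun v => if v = 0 then w else J.indMap 0, hmem w⟩ hne
  rw [CQ.bagAnswer]
  refine le_trans (le_of_eq ?_) h
  simp [qMngr, QAtom.mult, termVal]

/-- The bag answer of `qMngr` in the model `exI1` is exactly 1. -/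
lemma qMngr_answer_I1 : qMngr.bagAnswer exI1 [] = 1 := by
  have hmem : (∀ v, v ∉ qMngr.vars →
        (fun v : Var => if v = 0 then 1 else 0) v = exI1.indMap 0) ∧
      qMngr.answerVars.map (fun v : Var => if v = 0 then (1 : ℕ) else 0)
        = ([] : List Ind).map exI1.indMap := by
    constructor
    · intro v hv
      have : v ≠ 0 := by simpa [qMngr, CQ.vars] using hv
      simp [this, exI1]
    · rfl
  have := bagSum_eq_single
    (fun f : {f : Var → exI1.Δ //
        (∀ v, v ∉ qMngr.vars → f v = exI1.indMap 0) ∧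
        qMngr.answerVars.map f = ([] : List Ind).map exI1.indMap} =>
      (qMngr.atoms.map (QAtom.mult exI1 f.1)).prod)
    ⟨fun v => if v = 0 then 1 else 0, hmem⟩
    (fun b hb => by
      simp only [qMngr, QAtom.mult, termVal, List.map_cons, List.map_nil,
        List.prod_cons, List.prod_nil, mul_one]
      by_cases h0 : b.1 0 = 1
      · exfalso
        apply hb
        apply Subtype.ext
        funext v
        by_cases hv : v = 0
        · subst hv; simpa using h0
        · have := b.2.1 v (by simp [qMngr, CQ.vars, hv])
          simpa [hv, exI1] using this
      · simp [exI1, h0])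
  rw [CQ.bagAnswer, this]
  simp [qMngr, QAtom.mult, termVal, exI1]

lemma exI1_model : exI1.IsModel ⟨tboxEx, aboxEx⟩ := by
  constructor
  · intro ax hax
    simp [tboxEx] at hax
    rcases hax with h | h <;> subst h
    · intro u
      show exI1.cI 0 u ≤ bagSum (fun v => exI1.rI 0 u v)
      by_cases hu : u = 0
      · subst hu
        refine le_trans ?_ (le_bagSum (fun v => exI1.rI 0 0 v) 1)
        simp [exI1]
      · simp [exI1, hu]
    · intro u
      show bagSum (fun v => exI1.rI 0 v u) ≤ exI1.cI 1 u
      by_cases hu : u = 1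
      · subst hu
        rw [bagSum_eq_single (fun v => exI1.rI 0 v 1) 0 (fun b hb => by simp [exI1, hb])]
        simp [exI1]
      · rw [bagSum_eq_zero (fun v => by simp [exI1, hu])]
        exact zero_le
  · intro s
    show (aboxEx.count s : ℕ∞) ≤ exI1.assertMult s
    by_cases h0 : s = Assertion.conceptA 0 0
    · subst h0
      simp [aboxEx, BagInterp.assertMult, exI1]
    by_cases h1 : s = Assertion.conceptA 1 1
    · subst h1
      simp [aboxEx, BagInterp.assertMult, exI1]
    · have : aboxEx.count s = 0 := by
        rw [Multiset.count_eq_zero]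
        simp [aboxEx]
        exact ⟨h0, h1⟩
      simp [this]

lemma exI2_model : exI2.IsModel ⟨tboxEx, aboxEx⟩ := by
  constructor
  · intro ax hax
    simp [tboxEx] at hax
    rcases hax with h | h <;> subst h
    · intro u
      show exI2.cI 0 u ≤ bagSum (fun v => exI2.rI 0 u v)
      by_cases hu : u = 0
      · subst hu
        refine le_trans ?_ (le_bagSum (fun v => exI2.rI 0 0 v) 2)
        simp [exI2]
      · simp [exI2, hu]
    · intro u
      show bagSum (fun v => exI2.rI 0 v u) ≤ exI2.cI 1 u
      by_cases hu : u = 2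
      · subst hu
        rw [bagSum_eq_single (fun v => exI2.rI 0 v 2) 0 (fun b hb => by simp [exI2, hb])]
        simp [exI2]
      · rw [bagSum_eq_zero (fun v => by simp [exI2, hu])]
        exact zero_le
  · intro s
    show (aboxEx.count s : ℕ∞) ≤ exI2.assertMult s
    by_cases h0 : s = Assertion.conceptA 0 0
    · subst h0
      simp [aboxEx, BagInterp.assertMult, exI2]
    by_cases h1 : s = Assertion.conceptA 1 1
    · subst h1
      simp [aboxEx, BagInterp.assertMult, exI2]
    · have : aboxEx.count s = 0 := by
        rw [Multiset.count_eq_zero]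
        simp [aboxEx]
        exact ⟨h0, h1⟩
      simp [this]

lemma cert_qMngr : bagCertain ⟨tboxEx, aboxEx⟩ qMngr [] = 1 := by
  refine le_antisymm ?_ ?_
  · refine le_trans (iInf_le _ exI1) (le_trans (iInf_le _ exI1_model) ?_)
    exact le_of_eq qMngr_answer_I1
  · refine le_iInf fun J => le_iInf fun hJ => ?_
    refine le_trans ?_ (qMngr_answer_ge J)
    have := hJ.2 (Assertion.conceptA 1 1)
    rw [abox_mult_mngr] at this
    exact this

lemma cert_qLH : bagCertain ⟨tboxEx, aboxEx⟩ qLH [] = 0 := by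
  refine le_antisymm ?_ zero_le
  refine le_trans (iInf_le _ exI2) (le_trans (iInf_le _ exI2_model) ?_)
  rw [qLH_answer]
  simp [exI2]

/-- The DL-Lite_core^bag ontology `⟨tboxEx, aboxEx⟩` is
satisfiable but admits no bag model that is universal for the class of all CQs. -/
theorem statement_2 :
    Ontology.Satisfiable ⟨tboxEx, aboxEx⟩ ∧
    ¬ ∃ I : BagInterp, I.IsModel ⟨tboxEx, aboxEx⟩ ∧
        ∀ q : CQ, q.WellFormed → ∀ a : List Ind,
          bagCertain ⟨tboxEx, aboxEx⟩ q a = q.bagAnswer I a := by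
  constructor
  · exact ⟨exI1, exI1_model⟩
  · rintro ⟨I, hI, huniv⟩
    -- Emp(Lee) ≥ 1 in I
    have hEmp : (1 : ℕ∞) ≤ I.cI 0 (I.indMap 0) := by
      have := hI.2 (Assertion.conceptA 0 0)
      rwa [abox_mult_emp] at this
    -- first TBox axiom at Lee
    have hax1 : I.SatisfiesAx (TBoxAxiom.cIncl (DLConcept.atomic 0)
        (DLConcept.ex (Role.atomic 0))) := by
      apply hI.1
      simp [tboxEx]
    have hsum : (1 : ℕ∞) ≤ bagSum (fun v => I.rI 0 (I.indMap 0) v) :=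
      le_trans hEmp (hax1 (I.indMap 0))
    -- a witness manager v₀
    have hv0 : ∃ v₀ : I.Δ, I.rI 0 (I.indMap 0) v₀ ≠ 0 := by
      by_contra h
      push_neg at h
      rw [bagSum_eq_zero h] at hsum
      exact absurd hsum (by simp)
    obtain ⟨v₀, hv₀⟩ := hv0
    -- second TBox axiom at v₀
    have hax2 : I.SatisfiesAx (TBoxAxiom.cIncl (DLConcept.ex (Role.inv 0))
        (DLConcept.atomic 1)) := by
      apply hI.1
      simp [tboxEx]
    have hMv0 : (1 : ℕ∞) ≤ I.cI 1 v₀ := by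
      have h2 := hax2 v₀
      have h3 : I.rI 0 (I.indMap 0) v₀ ≤ I.conceptMult (DLConcept.ex (Role.inv 0)) v₀ :=
        le_bagSum (fun v => I.rI 0 v v₀) (I.indMap 0)
      have := le_trans h3 h2
      calc (1 : ℕ∞) ≤ I.rI 0 (I.indMap 0) v₀ := ENat.one_le_iff_ne_zero.mpr hv₀
        _ ≤ I.cI 1 v₀ := this
    -- Mngr(Hill) ≥ 1 in I
    have hMH : (1 : ℕ∞) ≤ I.cI 1 (I.indMap 1) := by
      have := hI.2 (Assertion.conceptA 1 1)
      rwa [abox_mult_mngr] at this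
    -- the universal model answers qMngr with 1
    have hans1 : qMngr.bagAnswer I [] = 1 := by
      rw [← huniv qMngr qMngr_wf [], cert_qMngr]
    -- hence v₀ = Hill
    have hv0H : v₀ = I.indMap 1 := by
      by_contra hne
      have h2 := qMngr_answer_ge_two I v₀ (I.indMap 1) hne
      rw [hans1] at h2
      have : (2 : ℕ∞) ≤ 1 := le_trans (by exact add_le_add hMv0 hMH) h2
      exact absurd this (by norm_num)
    -- but the universal model answers qLH with 0
    have hans0 : qLH.bagAnswer I [] = 0 := by
      rw [← huniv qLH qLH_wf [], cert_qLH]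
    rw [qLH_answer I] at hans0
    rw [hv0H] at hv₀
    exact hv₀ hans0
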